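/- Let H be a Hopf algebra over a field k with bijective antipode S, τ a Hopf algebra automorphism of H of finite order r, and (V, ρ) a finite-dimensional left H-module whose twisted exponent exp_τ(V) is finite. Then a positive integer k satisfies ρ(Γ^τ_{kr}(h)) = ε(h)·Id_V for all h ∈ H if and only if exp_τ(V) divides k. -/

import Mathlib

open scoped TensorProduct

noncomputable section

namespace TwistedExponent

variable (k H : Type*) [CommRing k] [Ring H] [HopfAlgebra k H]

/-- The convolution product of two linear endomorphisms of a bialgebra:
`f * g = μ ∘ (f ⊗ g) ∘ Δ`. -/
def conv (f g : H →ₗ[k] H) : H →ₗ[k] H :=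
  LinearMap.mul' k H ∘ₗ TensorProduct.map f g ∘ₗ Coalgebra.comul

/-- The convolution unit `η ∘ ε`, i.e. `h ↦ ε(h)·1`. -/
def convOne : H →ₗ[k] H := Algebra.linearMap k H ∘ₗ Coalgebra.counit

/-- `gamma T m` is the map `Γ_m = μ^m ∘ (Id ⊗ T ⊗ T² ⊗ ⋯ ⊗ T^{m-1}) ∘ Δ^{m-1}`, expressed as
the convolution product `Id * T * T² * ⋯ * T^{m-1}` (with `gamma T 0` the convolution unit). -/
def gamma (T : H →ₗ[k] H) : ℕ → (H →ₗ[k] H)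
  | 0 => convOne k H
  | (m + 1) => conv k H (gamma T m) (T ^ m)

/-- The inverse of the antipode, given that the antipode is bijective. -/
def antipodeInv (hS : Function.Bijective (HopfAlgebra.antipode (R := k) (A := H))) :
    H →ₗ[k] H :=
  (LinearEquiv.ofBijective (HopfAlgebra.antipode (R := k) (A := H)) hS).symm

/-- The map `S⁻² ∘ τ`. -/
def twist (hS : Function.Bijective (HopfAlgebra.antipode (R := k) (A := H)))
    (τ : H →ₗ[k] H) : H →ₗ[k] H :=
  antipodeInv k H hS ∘ₗ antipodeInv k H hS ∘ₗ τ

/-- `f : H → H` has exact (finite) order `r`. -/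
def HasOrder (τ : H → H) (r : ℕ) : Prop :=
  0 < r ∧ τ^[r] = id ∧ ∀ s : ℕ, 0 < s → s < r → τ^[s] ≠ id

/-- The map `Γ_m` acts on the `H`-module `V` as `ε·Id_V`, i.e.
`ρ(Γ_m(h)) = ε(h)·Id_V` for all `h ∈ H`. -/
def GammaTrivOn (T : H →ₗ[k] H) (m : ℕ)
    (V : Type*) [AddCommGroup V] [Module k V] [Module H V] [IsScalarTower k H V] : Prop :=
  ∀ (h : H) (v : V), gamma k H T m h • v = Coalgebra.counit (R := k) h • v

end TwistedExponent


namespace TwistedExponent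

variable {k H : Type*} [CommRing k] [Ring H] [HopfAlgebra k H]

local notation "S" => HopfAlgebra.antipode (R := k) (A := H)
local notation "cμ" => Coalgebra.comul (R := k) (A := H)

/-- Convolution product of linear maps from `H` to a `k`-algebra `B`. -/
def cv {B : Type*} [Ring B] [Algebra k B] (f g : H →ₗ[k] B) : H →ₗ[k] B :=
  LinearMap.mul' k B ∘ₗ TensorProduct.map f g ∘ₗ Coalgebra.comul

/-- Convolution unit. -/
def cvOne {B : Type*} [Ring B] [Algebra k B] : H →ₗ[k] B :=
  Algebra.linearMap k B ∘ₗ Coalgebra.counit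

lemma cv_repr {B : Type*} [Ring B] [Algebra k B] (f g : H →ₗ[k] B) (h : H)
    (re : Coalgebra.Repr k h (H × H)) :
    cv f g h = ∑ i ∈ re.index, f (re.left i) * g (re.right i) := by
  simp only [cv, LinearMap.comp_apply, ← re.eq, map_sum, TensorProduct.map_tmul,
    LinearMap.mul'_apply]

lemma repr_smul_left (h : H) (re : Coalgebra.Repr k h (H × H)) :
    ∑ i ∈ re.index, Coalgebra.counit (R := k) (re.right i) • re.left i = h := by
  have := congrArg (TensorProduct.rid k H) (Coalgebra.sum_tmul_counit_eq re)
  rw [map_sum] at this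
  simp only [TensorProduct.rid_tmul, one_smul] at this
  exact this

lemma repr_smul_right (h : H) (re : Coalgebra.Repr k h (H × H)) :
    ∑ i ∈ re.index, Coalgebra.counit (R := k) (re.left i) • re.right i = h := by
  have := congrArg (TensorProduct.lid k H) (Coalgebra.sum_counit_tmul_eq re)
  rw [map_sum] at this
  simp only [TensorProduct.lid_tmul, one_smul] at this
  exact this

lemma cv_cvOne {B : Type*} [Ring B] [Algebra k B] (f : H →ₗ[k] B) : cv f cvOne = f := by
  ext h
  rw [cv_repr f cvOne h (Coalgebra.Repr.arbitrary k h)]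
  simp only [cvOne, LinearMap.comp_apply, Algebra.linearMap_apply]
  calc ∑ i ∈ _, f ((Coalgebra.Repr.arbitrary k h).left i) *
        algebraMap k B (Coalgebra.counit ((Coalgebra.Repr.arbitrary k h).right i))
      = ∑ i ∈ (Coalgebra.Repr.arbitrary k h).index,
          f (Coalgebra.counit (R := k) ((Coalgebra.Repr.arbitrary k h).right i) •
            (Coalgebra.Repr.arbitrary k h).left i) := by
        refine Finset.sum_congr rfl fun i _ => ?_
        rw [map_smul, ← Algebra.commutes, ← Algebra.smul_def]
    _ = f h := by rw [← map_sum, repr_smul_left]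

lemma cvOne_cv {B : Type*} [Ring B] [Algebra k B] (f : H →ₗ[k] B) : cv cvOne f = f := by
  ext h
  rw [cv_repr cvOne f h (Coalgebra.Repr.arbitrary k h)]
  simp only [cvOne, LinearMap.comp_apply, Algebra.linearMap_apply]
  calc ∑ i ∈ _, algebraMap k B (Coalgebra.counit ((Coalgebra.Repr.arbitrary k h).left i)) *
        f ((Coalgebra.Repr.arbitrary k h).right i)
      = ∑ i ∈ (Coalgebra.Repr.arbitrary k h).index,
          f (Coalgebra.counit (R := k) ((Coalgebra.Repr.arbitrary k h).left i) •
            (Coalgebra.Repr.arbitrary k h).right i) := by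
        refine Finset.sum_congr rfl fun i _ => ?_
        rw [map_smul, ← Algebra.smul_def]
    _ = f h := by rw [← map_sum, repr_smul_right]

lemma cv_assoc {B : Type*} [Ring B] [Algebra k B] (f g p : H →ₗ[k] B) :
    cv (cv f g) p = cv f (cv g p) := by
  have key : ∀ t : (H ⊗[k] H) ⊗[k] H,
      LinearMap.mul' k B (TensorProduct.map (LinearMap.mul' k B ∘ₗ TensorProduct.map f g) p t)
      = LinearMap.mul' k B (TensorProduct.map f (LinearMap.mul' k B ∘ₗ TensorProduct.map g p)
          (TensorProduct.assoc k H H H t)) := by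
    have : (LinearMap.mul' k B ∘ₗ
          TensorProduct.map (LinearMap.mul' k B ∘ₗ TensorProduct.map f g) p)
        = (LinearMap.mul' k B ∘ₗ
            TensorProduct.map f (LinearMap.mul' k B ∘ₗ TensorProduct.map g p)) ∘ₗ
          (TensorProduct.assoc k H H H).toLinearMap := by
      apply TensorProduct.ext_threefold
      intro x y z
      simp [mul_assoc]
    intro t
    exact LinearMap.congr_fun this t
  have e1 : TensorProduct.map
        (LinearMap.mul' k B ∘ₗ TensorProduct.map f g) p ∘ₗ
        TensorProduct.map (Coalgebra.comul (R := k) (A := H)) LinearMap.id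
      = TensorProduct.map (LinearMap.mul' k B ∘ₗ TensorProduct.map f g ∘ₗ Coalgebra.comul) p := by
    rw [← TensorProduct.map_comp, LinearMap.comp_id, LinearMap.comp_assoc]
  have e2 : TensorProduct.map f
        (LinearMap.mul' k B ∘ₗ TensorProduct.map g p) ∘ₗ
        TensorProduct.map LinearMap.id (Coalgebra.comul (R := k) (A := H))
      = TensorProduct.map f (LinearMap.mul' k B ∘ₗ TensorProduct.map g p ∘ₗ Coalgebra.comul) := by
    rw [← TensorProduct.map_comp, LinearMap.comp_id, LinearMap.comp_assoc]
  ext h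
  simp only [cv, LinearMap.comp_apply]
  rw [← LinearMap.congr_fun e1 (Coalgebra.comul h), LinearMap.comp_apply,
    show TensorProduct.map (Coalgebra.comul (R := k) (A := H)) LinearMap.id
        = (Coalgebra.comul (R := k) (A := H)).rTensor H from rfl,
    key, Coalgebra.coassoc_apply,
    show (Coalgebra.comul (R := k) (A := H)).lTensor H
        = TensorProduct.map LinearMap.id (Coalgebra.comul (R := k) (A := H)) from rfl,
    ← LinearMap.comp_apply (TensorProduct.map f _), e2]

lemma counit_antipode (h : H) :
    Coalgebra.counit (R := k) (S h) = Coalgebra.counit (R := k) h := by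
  obtain re := Coalgebra.Repr.arbitrary k h
  have h1 := HopfAlgebra.sum_antipode_mul_eq_algebraMap_counit (R := k) re
  have h2 := congrArg (Coalgebra.counit (R := k)) h1
  rw [map_sum] at h2
  simp only [Bialgebra.counit_mul] at h2
  have h3 : Coalgebra.counit (R := k) (algebraMap k H (Coalgebra.counit (R := k) h))
      = Coalgebra.counit (R := k) h := by
    rw [Algebra.algebraMap_eq_smul_one, map_smul, Bialgebra.counit_one, smul_eq_mul, mul_one]
  rw [h3] at h2
  calc Coalgebra.counit (R := k) (S h)
      = Coalgebra.counit (R := k) (S (∑ i ∈ re.index,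
          Coalgebra.counit (R := k) (re.right i) • re.left i)) := by
        congr 1
        congr 1
        symm
        exact repr_smul_left h re
    _ = ∑ i ∈ re.index, Coalgebra.counit (R := k) (re.right i) *
          Coalgebra.counit (R := k) (S (re.left i)) := by
        rw [map_sum, map_sum]
        refine Finset.sum_congr rfl fun i _ => ?_
        rw [map_smul, map_smul, smul_eq_mul]
    _ = Coalgebra.counit (R := k) h := by
        rw [← h2]
        refine Finset.sum_congr rfl fun i _ => mul_comm _ _

/-- `Δ * (Δ ∘ S) = 1` in the convolution algebra `Hom(H, H ⊗ H)`. -/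
lemma cv_comul_comulS : cv (cμ) ((cμ) ∘ₗ S) = (cvOne : H →ₗ[k] H ⊗[k] H) := by
  have key1 : LinearMap.mul' k (H ⊗[k] H) ∘ₗ TensorProduct.map (cμ) (cμ)
      = (cμ) ∘ₗ LinearMap.mul' k H := by
    apply TensorProduct.ext'
    intro x y
    simp [Bialgebra.comul_mul]
  have e1 : TensorProduct.map (cμ) ((cμ) ∘ₗ S)
      = TensorProduct.map (cμ) (cμ) ∘ₗ TensorProduct.map LinearMap.id S := by
    rw [← TensorProduct.map_comp, LinearMap.comp_id]
  have key1' : ∀ t, LinearMap.mul' k (H ⊗[k] H) (TensorProduct.map (cμ) (cμ) t)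
      = (cμ) (LinearMap.mul' k H t) := fun t => LinearMap.congr_fun key1 t
  ext h
  simp only [cv, cvOne, LinearMap.comp_apply, e1]
  rw [key1',
    show TensorProduct.map (LinearMap.id (R := k) (M := H)) S = LinearMap.lTensor H S from rfl,
    HopfAlgebra.mul_antipode_lTensor_comul_apply,
    Algebra.algebraMap_eq_smul_one, map_smul, Bialgebra.comul_one, Algebra.linearMap_apply,
    Algebra.algebraMap_eq_smul_one]

/-- The candidate for `Δ ∘ S`: `(S ⊗ S) ∘ swap ∘ Δ`. -/
def Gm : H →ₗ[k] H ⊗[k] H :=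
  TensorProduct.map S S ∘ₗ (TensorProduct.comm k H H).toLinearMap ∘ₗ Coalgebra.comul

/-- `((S ⊗ S) ∘ swap ∘ Δ) * Δ = 1` in the convolution algebra `Hom(H, H ⊗ H)`. -/
lemma cv_Gm_comul : cv (Gm (k := k) (H := H)) (cμ) = cvOne := by
  set G2 : H ⊗[k] H →ₗ[k] H ⊗[k] H :=
    TensorProduct.map S S ∘ₗ (TensorProduct.comm k H H).toLinearMap with hG2
  set m := LinearMap.mul' k H
  set M2 := LinearMap.mul' k (H ⊗[k] H)
  set F : (H ⊗[k] H) ⊗[k] H →ₗ[k] H ⊗[k] H := M2 ∘ₗ TensorProduct.map G2 (cμ) with hF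
  have eA : TensorProduct.map (Gm (k := k) (H := H)) (cμ)
      = TensorProduct.map G2 (cμ) ∘ₗ TensorProduct.map (cμ) LinearMap.id := by
    rw [← TensorProduct.map_comp, LinearMap.comp_id]
    rfl
  have claimK : ∀ x y : H, F ((TensorProduct.assoc k H H H).symm (x ⊗ₜ[k] (cμ) y))
      = (1 : H) ⊗ₜ[k] (S x * y) := by
    intro x y
    set Gx : H ⊗[k] (H ⊗[k] H) →ₗ[k] H ⊗[k] H :=
      TensorProduct.map (m ∘ₗ TensorProduct.map S LinearMap.id) (LinearMap.mulLeft k (S x)) ∘ₗ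
        (TensorProduct.assoc k H H H).symm.toLinearMap with hGx
    have sub2 : ∀ u : H, LinearMap.mulLeft k ((S u) ⊗ₜ[k] (S x))
        = Gx ∘ₗ TensorProduct.mk k H (H ⊗[k] H) u := by
      intro u
      apply TensorProduct.ext'
      intro z w
      simp [Gx, Algebra.TensorProduct.tmul_mul_tmul, m]
    have sub1 : (F ∘ₗ (TensorProduct.assoc k H H H).symm.toLinearMap ∘ₗ
          TensorProduct.mk k H (H ⊗[k] H) x)
        = Gx ∘ₗ LinearMap.lTensor H (cμ) := by
      apply TensorProduct.ext'
      intro u v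
      have l1 : F ((TensorProduct.assoc k H H H).symm (x ⊗ₜ[k] (u ⊗ₜ[k] v)))
          = ((S u) ⊗ₜ[k] (S x)) * (cμ) v := by
        simp only [TensorProduct.assoc_symm_tmul, F, LinearMap.comp_apply,
          TensorProduct.map_tmul, M2, LinearMap.mul'_apply, G2,
          LinearEquiv.coe_coe, TensorProduct.comm_tmul]
      simp only [LinearMap.comp_apply, LinearEquiv.coe_coe, TensorProduct.mk_apply,
        LinearMap.lTensor_tmul, l1]
      exact LinearMap.congr_fun (sub2 u) ((cμ) v)
    have step1 : F ((TensorProduct.assoc k H H H).symm (x ⊗ₜ[k] (cμ) y))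
        = Gx (LinearMap.lTensor H (cμ) ((cμ) y)) :=
      LinearMap.congr_fun sub1 ((cμ) y)
    rw [step1, ← Coalgebra.coassoc_apply]
    have step2 : Gx ((TensorProduct.assoc k H H H)
          (LinearMap.rTensor H (cμ) ((cμ) y)))
        = TensorProduct.map (m ∘ₗ TensorProduct.map S LinearMap.id) (LinearMap.mulLeft k (S x))
            (LinearMap.rTensor H (cμ) ((cμ) y)) := by
      simp only [Gx, LinearMap.comp_apply, LinearEquiv.coe_coe,
        LinearEquiv.symm_apply_apply]
    rw [step2]
    have eB : TensorProduct.map (m ∘ₗ TensorProduct.map S LinearMap.id)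
          (LinearMap.mulLeft k (S x)) ∘ₗ TensorProduct.map (cμ) LinearMap.id
        = TensorProduct.map ((m ∘ₗ TensorProduct.map S LinearMap.id) ∘ₗ (cμ))
            (LinearMap.mulLeft k (S x)) := by
      rw [← TensorProduct.map_comp, LinearMap.comp_id]
    have eB' := LinearMap.congr_fun eB ((cμ) y)
    simp only [LinearMap.comp_apply] at eB'
    rw [show LinearMap.rTensor H (cμ) = TensorProduct.map (cμ) LinearMap.id from rfl, eB']
    have eAx : (m ∘ₗ TensorProduct.map S LinearMap.id) ∘ₗ (cμ)
        = Algebra.linearMap k H ∘ₗ Coalgebra.counit := by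
      rw [LinearMap.comp_assoc,
        show TensorProduct.map S (LinearMap.id (R := k) (M := H)) = LinearMap.rTensor H S from rfl]
      exact HopfAlgebra.mul_antipode_rTensor_comul
    rw [eAx]
    have eC : TensorProduct.map (Algebra.linearMap k H ∘ₗ Coalgebra.counit)
          (LinearMap.mulLeft k (S x))
        = TensorProduct.map (Algebra.linearMap k H) (LinearMap.mulLeft k (S x)) ∘ₗ
          TensorProduct.map (Coalgebra.counit (R := k) (A := H)) LinearMap.id := by
      rw [← TensorProduct.map_comp, LinearMap.comp_id]
    rw [eC, LinearMap.comp_apply,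
      show TensorProduct.map (Coalgebra.counit (R := k) (A := H)) LinearMap.id
        = LinearMap.rTensor H (Coalgebra.counit (R := k) (A := H)) from rfl,
      Coalgebra.rTensor_counit_comul]
    simp [LinearMap.mulLeft_apply]
  -- now assemble
  ext h
  obtain re := Coalgebra.Repr.arbitrary k h
  simp only [cv, cvOne, LinearMap.comp_apply, eA]
  rw [show TensorProduct.map (cμ) (LinearMap.id (R := k) (M := H))
      = LinearMap.rTensor H (cμ) from rfl, ← Coalgebra.coassoc_symm_apply]
  have expand : LinearMap.lTensor H (cμ) ((cμ) h)
      = ∑ i ∈ re.index, re.left i ⊗ₜ[k] (cμ) (re.right i) := by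
    rw [← re.eq, map_sum]
    simp only [LinearMap.lTensor_tmul]
  rw [expand, map_sum, map_sum, map_sum]
  have : ∀ i ∈ re.index, M2 (TensorProduct.map G2 (cμ)
        ((TensorProduct.assoc k H H H).symm (re.left i ⊗ₜ[k] (cμ) (re.right i))))
      = (1 : H) ⊗ₜ[k] (S (re.left i) * re.right i) := fun i _ => claimK (re.left i) (re.right i)
  rw [Finset.sum_congr rfl this, ← TensorProduct.tmul_sum,
    HopfAlgebra.sum_antipode_mul_eq_algebraMap_counit (R := k) re]
  simp only [Algebra.linearMap_apply, Algebra.TensorProduct.algebraMap_apply,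
    Algebra.algebraMap_eq_smul_one, TensorProduct.tmul_smul, TensorProduct.smul_tmul']
  rw [← TensorProduct.smul_tmul', ← Algebra.TensorProduct.one_def]

lemma comul_antipode : (cμ) ∘ₗ S = Gm (k := k) (H := H) := by
  have h1 := cv_assoc (Gm (k := k) (H := H)) (cμ) ((cμ) ∘ₗ S)
  rw [cv_Gm_comul, cv_comul_comulS, cvOne_cv, cv_cvOne] at h1
  exact h1

lemma comul_antipode_apply (x : H) :
    (cμ) (S x) = TensorProduct.map S S ((TensorProduct.comm k H H) ((cμ) x)) :=
  LinearMap.congr_fun (comul_antipode) x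

lemma swap_map (f g : H →ₗ[k] H) (t : H ⊗[k] H) :
    (TensorProduct.comm k H H) (TensorProduct.map f g t)
      = TensorProduct.map g f ((TensorProduct.comm k H H) t) := by
  have : (TensorProduct.comm k H H).toLinearMap ∘ₗ TensorProduct.map f g
      = TensorProduct.map g f ∘ₗ (TensorProduct.comm k H H).toLinearMap := by
    apply TensorProduct.ext'
    intro x y
    simp
  exact LinearMap.congr_fun this t

lemma comm_comm (t : H ⊗[k] H) :
    (TensorProduct.comm k H H) ((TensorProduct.comm k H H) t) = t := by
  have : (TensorProduct.comm k H H).toLinearMap ∘ₗ (TensorProduct.comm k H H).toLinearMap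
      = LinearMap.id := by
    apply TensorProduct.ext'
    intro x y
    simp
  exact LinearMap.congr_fun this t

variable (hS : Function.Bijective (HopfAlgebra.antipode (R := k) (A := H)))

lemma antipode_antipodeInv (x : H) : S (antipodeInv k H hS x) = x := by
  have := (LinearEquiv.ofBijective (HopfAlgebra.antipode (R := k) (A := H)) hS).apply_symm_apply x
  simpa [antipodeInv, LinearEquiv.ofBijective_apply] using this

lemma antipodeInv_antipode (x : H) : antipodeInv k H hS (S x) = x := by
  have := (LinearEquiv.ofBijective (HopfAlgebra.antipode (R := k) (A := H)) hS).symm_apply_apply x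
  simpa [antipodeInv, LinearEquiv.ofBijective_apply] using this

lemma antipodeInv_bijective : Function.Bijective (antipodeInv k H hS) :=
  (LinearEquiv.ofBijective (HopfAlgebra.antipode (R := k) (A := H)) hS).symm.bijective

lemma counit_antipodeInv (x : H) :
    Coalgebra.counit (R := k) (antipodeInv k H hS x) = Coalgebra.counit (R := k) x := by
  conv_rhs => rw [← antipode_antipodeInv hS x]
  rw [counit_antipode]

lemma comul_antipodeInv (x : H) :
    (cμ) (antipodeInv k H hS x) = TensorProduct.map (antipodeInv k H hS) (antipodeInv k H hS)
      ((TensorProduct.comm k H H) ((cμ) x)) := by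
  have cancel : ∀ t : H ⊗[k] H,
      TensorProduct.map (antipodeInv k H hS) (antipodeInv k H hS)
        (TensorProduct.map S S t) = t := by
    intro t
    have : TensorProduct.map (antipodeInv k H hS) (antipodeInv k H hS) ∘ₗ
        TensorProduct.map S S = LinearMap.id := by
      rw [← TensorProduct.map_comp, show (antipodeInv k H hS) ∘ₗ
        (HopfAlgebra.antipode (R := k) (A := H)) = LinearMap.id from
          LinearMap.ext (antipodeInv_antipode hS), TensorProduct.map_id]
    exact LinearMap.congr_fun this t
  have h1 : (cμ) x = TensorProduct.map S S
      ((TensorProduct.comm k H H) ((cμ) (antipodeInv k H hS x))) := by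
    conv_lhs => rw [← antipode_antipodeInv hS x, comul_antipode_apply]
  have h2 : TensorProduct.map (antipodeInv k H hS) (antipodeInv k H hS) ((cμ) x)
      = (TensorProduct.comm k H H) ((cμ) (antipodeInv k H hS x)) := by rw [h1, cancel]
  calc (cμ) (antipodeInv k H hS x)
      = (TensorProduct.comm k H H) ((TensorProduct.comm k H H)
          ((cμ) (antipodeInv k H hS x))) := (comm_comm _).symm
    _ = (TensorProduct.comm k H H) (TensorProduct.map (antipodeInv k H hS)
          (antipodeInv k H hS) ((cμ) x)) := by rw [h2]
    _ = TensorProduct.map (antipodeInv k H hS) (antipodeInv k H hS)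
          ((TensorProduct.comm k H H) ((cμ) x)) := swap_map _ _ _

/-- A linear endomorphism of `H` that is a morphism of coalgebras. -/
def IsCoalgMap (T : H →ₗ[k] H) : Prop :=
  (Coalgebra.comul ∘ₗ T = TensorProduct.map T T ∘ₗ Coalgebra.comul) ∧
  (Coalgebra.counit ∘ₗ T = Coalgebra.counit (R := k))

lemma IsCoalgMap.comp {c1 c2 : H →ₗ[k] H} (h1 : IsCoalgMap c1) (h2 : IsCoalgMap c2) :
    IsCoalgMap (c1 ∘ₗ c2) := by
  constructor
  · ext x
    have e1 := LinearMap.congr_fun h1.1 (c2 x)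
    have e2 := LinearMap.congr_fun h2.1 x
    simp only [LinearMap.comp_apply] at e1 e2 ⊢
    rw [e1, e2, ← LinearMap.comp_apply (TensorProduct.map c1 c1), ← TensorProduct.map_comp]
  · ext x
    have e1 := LinearMap.congr_fun h1.2 (c2 x)
    have e2 := LinearMap.congr_fun h2.2 x
    simp only [LinearMap.comp_apply] at e1 e2 ⊢
    rw [e1, e2]

lemma IsCoalgMap.id' : IsCoalgMap (LinearMap.id (R := k) (M := H)) := by
  constructor
  · rw [TensorProduct.map_id]; rfl
  · rfl

lemma IsCoalgMap.pow {T : H →ₗ[k] H} (hT : IsCoalgMap T) (n : ℕ) : IsCoalgMap (T ^ n) := by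
  induction n with
  | zero => rw [pow_zero]; exact IsCoalgMap.id'
  | succ n ih =>
    rw [pow_succ, Module.End.mul_eq_comp]
    exact ih.comp hT

lemma isCoalgMap_antipodeInv2 : IsCoalgMap ((antipodeInv k H hS) ∘ₗ antipodeInv k H hS) := by
  constructor
  · ext x
    simp only [LinearMap.comp_apply]
    rw [comul_antipodeInv hS (antipodeInv k H hS x), comul_antipodeInv hS x, swap_map, comm_comm,
      ← LinearMap.comp_apply (TensorProduct.map _ _), ← TensorProduct.map_comp]
  · ext x
    simp only [LinearMap.comp_apply]
    rw [counit_antipodeInv hS, counit_antipodeInv hS]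

lemma conv_eq_cv (f g : H →ₗ[k] H) : conv k H f g = cv f g := rfl

lemma convOne_eq : convOne k H = (cvOne : H →ₗ[k] H) := rfl

lemma cv_comp_coalgMap {c : H →ₗ[k] H} (hc : IsCoalgMap c) (f g : H →ₗ[k] H) :
    cv (f ∘ₗ c) (g ∘ₗ c) = cv f g ∘ₗ c := by
  ext h
  have e := LinearMap.congr_fun hc.1 h
  simp only [LinearMap.comp_apply] at e ⊢
  simp only [cv, LinearMap.comp_apply, e]
  rw [← LinearMap.comp_apply (TensorProduct.map f g), ← TensorProduct.map_comp]

lemma counit_pow {T : H →ₗ[k] H} (hT : IsCoalgMap T) (a : ℕ) (x : H) :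
    Coalgebra.counit (R := k) ((T ^ a) x) = Coalgebra.counit (R := k) x := by
  have := LinearMap.congr_fun (hT.pow a).2 x
  simpa using this

lemma gamma_zero (T : H →ₗ[k] H) : gamma k H T 0 = convOne k H := rfl

lemma gamma_succ (T : H →ₗ[k] H) (m : ℕ) :
    gamma k H T (m + 1) = conv k H (gamma k H T m) (T ^ m) := rfl

lemma gamma_add {T : H →ₗ[k] H} (hT : IsCoalgMap T) (a b : ℕ) :
    gamma k H T (a + b) = conv k H (gamma k H T a) (gamma k H T b ∘ₗ T ^ a) := by
  induction b with
  | zero =>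
    rw [Nat.add_zero, gamma_zero]
    have hone : convOne k H ∘ₗ T ^ a = convOne k H := by
      ext x
      simp only [LinearMap.comp_apply, convOne, Algebra.linearMap_apply]
      rw [counit_pow hT a x]
    rw [hone, conv_eq_cv, convOne_eq, cv_cvOne]
  | succ b ih =>
    rw [← Nat.add_assoc, gamma_succ T (a + b), gamma_succ T b, ih]
    have hpow : T ^ (a + b) = (T ^ b) ∘ₗ (T ^ a) := by
      rw [add_comm a b, pow_add, Module.End.mul_eq_comp]
    rw [hpow]
    simp only [conv_eq_cv]
    rw [cv_assoc, cv_comp_coalgMap (hT.pow a)]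

lemma bijective_pow {T : H →ₗ[k] H} (hb : Function.Bijective T) (n : ℕ) :
    Function.Bijective (T ^ n) := by
  induction n with
  | zero =>
    rw [pow_zero, Module.End.one_eq_id]
    exact Function.bijective_id
  | succ n ih =>
    rw [pow_succ', Module.End.mul_eq_comp, LinearMap.coe_comp]
    exact hb.comp ih

variable {V : Type*} [AddCommGroup V] [Module k V] [Module H V] [IsScalarTower k H V]

lemma conv_smul (f g : H →ₗ[k] H) (h : H) (re : Coalgebra.Repr k h (H × H)) (v : V) :
    conv k H f g h • v = ∑ i ∈ re.index, f (re.left i) • (g (re.right i) • v) := by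
  rw [conv_eq_cv, cv_repr f g h re, Finset.sum_smul]
  exact Finset.sum_congr rfl fun i _ => mul_smul _ _ _

lemma gamma_add_smul {T : H →ₗ[k] H} (hT : IsCoalgMap T) (a b : ℕ)
    (ha : GammaTrivOn k H T a V) (h : H) (v : V) :
    gamma k H T (a + b) h • v = gamma k H T b ((T ^ a) h) • v := by
  obtain re := Coalgebra.Repr.arbitrary k h
  rw [gamma_add hT a b, conv_smul _ _ h re v]
  have e1 : ∀ i ∈ re.index, gamma k H T a (re.left i) •
        ((gamma k H T b ∘ₗ T ^ a) (re.right i) • v)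
      = ((gamma k H T b ∘ₗ T ^ a)
          (Coalgebra.counit (R := k) (re.left i) • re.right i)) • v := by
    intro i _
    rw [ha (re.left i), map_smul, smul_assoc]
  rw [Finset.sum_congr rfl e1, ← Finset.sum_smul, ← map_sum, repr_smul_right h re]
  simp only [LinearMap.comp_apply]

lemma gammaTriv_add_iff {T : H →ₗ[k] H} (hT : IsCoalgMap T) (hb : Function.Bijective T)
    (a b : ℕ) (ha : GammaTrivOn k H T a V) :
    GammaTrivOn k H T (a + b) V ↔ GammaTrivOn k H T b V := by
  constructor
  · intro hab h v
    obtain ⟨h', rfl⟩ := (bijective_pow hb a).surjective h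
    have key := hab h' v
    rw [gamma_add_smul hT a b ha] at key
    rw [counit_pow hT a h']
    exact key
  · intro hbb h v
    rw [gamma_add_smul hT a b ha, hbb, counit_pow hT a]

end TwistedExponent

open TwistedExponent


/-- Let `H` be a Hopf algebra over a field `k` with bijective antipode `S`,
`τ` a Hopf algebra automorphism of `H` of finite order `r`, and `(V, ρ)` a finite-dimensional
left `H`-module whose twisted exponent `e = exp_τ(V)` (the least `e ≥ 1` with
`ρ(Γ^τ_{er}(h)) = ε(h)·Id_V` for all `h`) is finite.  Then a positive integer `n` satisfies
`ρ(Γ^τ_{nr}(h)) = ε(h)·Id_V` for all `h ∈ H` if and only if `e` divides `n`. -/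
theorem stmt5 {k H : Type*} [Field k] [Ring H] [HopfAlgebra k H]
    (hS : Function.Bijective (HopfAlgebra.antipode (R := k) (A := H)))
    (τ : H ≃ₐc[k] H) (r : ℕ) (hr : HasOrder H (⇑τ) r)
    (V : Type*) [AddCommGroup V] [Module k V] [Module H V] [IsScalarTower k H V]
    [FiniteDimensional k V]
    (e : ℕ)
    (he : IsLeast {n : ℕ | 0 < n ∧
      GammaTrivOn k H (twist k H hS (τ : H →ₗ[k] H)) (n * r) V} e) :
    ∀ n : ℕ, 0 < n →
      (GammaTrivOn k H (twist k H hS (τ : H →ₗ[k] H)) (n * r) V ↔ e ∣ n) := by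
  
  set T := twist k H hS (τ : H →ₗ[k] H) with hTdef
  have hτ1 : Coalgebra.comul ∘ₗ (τ : H →ₗ[k] H)
      = TensorProduct.map (τ : H →ₗ[k] H) (τ : H →ₗ[k] H) ∘ₗ Coalgebra.comul :=
    (CoalgHomClass.map_comp_comul (τ : H ≃ₐc[k] H)).symm
  have hτ2 : Coalgebra.counit ∘ₗ (τ : H →ₗ[k] H) = Coalgebra.counit (R := k) :=
    CoalgHomClass.counit_comp (τ : H ≃ₐc[k] H)
  have hτb : Function.Bijective (τ : H →ₗ[k] H) := τ.bijective
  have hTc : IsCoalgMap T := by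
    have heq : T = ((antipodeInv k H hS) ∘ₗ antipodeInv k H hS) ∘ₗ (τ : H →ₗ[k] H) := by
      rw [hTdef]
      rfl
    rw [heq]
    exact (isCoalgMap_antipodeInv2 hS).comp ⟨hτ1, hτ2⟩
  have hTb : Function.Bijective T := by
    have : ⇑T = ⇑(antipodeInv k H hS) ∘ ⇑(antipodeInv k H hS) ∘ ⇑(τ : H →ₗ[k] H) := rfl
    rw [this]
    exact (antipodeInv_bijective hS).comp ((antipodeInv_bijective hS).comp hτb)
  have addIff : ∀ a b : ℕ, GammaTrivOn k H T (a * r) V →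
      (GammaTrivOn k H T ((a + b) * r) V ↔ GammaTrivOn k H T (b * r) V) := by
    intro a b ha
    rw [add_mul]
    exact gammaTriv_add_iff hTc hTb (a * r) (b * r) ha
  obtain ⟨⟨hePos, heP⟩, heLB⟩ := he
  have mult : ∀ c : ℕ, GammaTrivOn k H T (e * (c + 1) * r) V := by
    intro c
    induction c with
    | zero =>
      have h0 : e * (0 + 1) = e := by ring
      rw [h0]
      exact heP
    | succ c ih =>
      have h0 : e * (c + 1 + 1) = e * (c + 1) + e := by ring
      rw [h0]
      exact (addIff (e * (c + 1)) e ih).mpr heP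
  have main : ∀ n : ℕ, 0 < n → GammaTrivOn k H T (n * r) V → e ∣ n := by
    intro n
    induction n using Nat.strong_induction_on with
    | _ n ih =>
      intro hn hPn
      have hen : e ≤ n := heLB ⟨hn, hPn⟩
      rcases eq_or_lt_of_le hen with heq | hlt
      · exact heq ▸ dvd_refl e
      · have h2 : GammaTrivOn k H T ((e + (n - e)) * r) V := by
          rw [show e + (n - e) = n by omega]
          exact hPn
        have h3 : GammaTrivOn k H T ((n - e) * r) V := (addIff e (n - e) heP).mp h2
        obtain ⟨c, hc⟩ := ih (n - e) (by omega) (by omega) h3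
        exact ⟨c + 1, by rw [Nat.mul_succ]; omega⟩
  intro n hn
  constructor
  · exact main n hn
  · rintro ⟨c, rfl⟩
    rcases c with _ | c
    · omega
    · exact mult c
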